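/- Let Σ be the language with one binary relation symbol < and constant symbols c_q for each rational number q, let Q* be the Σ-structure with universe ℚ, < interpreted as the natural order, and c_q interpreted as q, and let M' be a model of Th(Q*) in which each complete 1-type over ∅ has at most one realization. If λ is the cardinality of the set of non-isolated complete 1-types over ∅ realized in M', then |H(M')| = 2^λ. -/

import Mathlib

open FirstOrder FirstOrder.Language Set Cardinal

/-- Relation symbols: a single binary relation `<`. -/
inductive QRel : ℕ → Type
  | lt : QRel 2

/-- The language with one binary relation symbol `<` and a constant symbol `c_q`
for each rational number `q`. -/
def QLang : Language :=
  { Functions := fun n => match n with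
      | 0 => ℚ
      | _ + 1 => Empty
    Relations := QRel }

/-- The structure `Q*`: universe `ℚ`, `<` the natural order, `c_q` interpreted as `q`. -/
instance : QLang.Structure ℚ where
  funMap {n} f _ := match n, f with
    | 0, q => q
  RelMap {n} r v := match n, r with
    | 2, QRel.lt => v 0 < v 1

/-- The family of universes of elementary submodels. -/
def ESub (L : Language) (M : Type*) [L.Structure M] : Set (Set M) :=
  {N | ∃ S : L.ElementarySubstructure M, (S : Set M) = N}

/-- The complete 1-type over `∅` of an element `a`. -/
def tp1 (L : Language) {M : Type*} [L.Structure M] (a : M) : Set (L.Formula (Fin 1)) :=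
  {φ | φ.Realize (fun _ => a)}

/-- A set of 1-formulas is isolated (w.r.t. the complete theory of `M`) if some single
formula of it implies all its formulas. -/
def IsIsolated1 (L : Language) (M : Type*) [L.Structure M]
    (p : Set (L.Formula (Fin 1))) : Prop :=
  ∃ φ ∈ p, ∀ ψ ∈ p, ∀ x : M,
    Formula.Realize φ (fun _ => x) → Formula.Realize ψ (fun _ => x)

namespace QEwork

variable {M : Type*} [QLang.Structure M]

def ltM (a b : M) : Prop := Structure.RelMap (L := QLang) QRel.lt ![a, b]

def cst (q : ℚ) : M := Structure.funMap (L := QLang) (n := 0) q ![]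

theorem ltQ (a b : ℚ) : ltM a b ↔ a < b := Iff.rfl

theorem cstQ (q : ℚ) : (cst q : ℚ) = q := rfl

structure DLO (M : Type*) [QLang.Structure M] : Prop where
  irr : ∀ a : M, ¬ ltM a a
  tr : ∀ a b c : M, ltM a b → ltM b c → ltM a c
  tot : ∀ a b : M, ltM a b ∨ a = b ∨ ltM b a
  dense : ∀ a b : M, ltM a b → ∃ z, ltM a z ∧ ltM z b
  nomax : ∀ a : M, ∃ b, ltM a b
  nomin : ∀ a : M, ∃ b, ltM b a

theorem DLO.asymm (h : DLO M) {a b : M} (hab : ltM a b) : ¬ ltM b a :=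
  fun hba => h.irr a (h.tr a b a hab hba)

theorem DLO.ne (h : DLO M) {a b : M} (hab : ltM a b) : a ≠ b := by
  rintro rfl; exact h.irr a hab

theorem dloQ : DLO ℚ where
  irr a := lt_irrefl a
  tr a b c := lt_trans
  tot a b := lt_trichotomy a b
  dense a b h := by obtain ⟨z, h1, h2⟩ := exists_between h; exact ⟨z, h1, h2⟩
  nomax a := ⟨a + 1, by simp [ltQ]⟩
  nomin a := ⟨a - 1, by simp [ltQ]⟩

/-- max over a list -/
theorem DLO.exists_max (h : DLO M) : ∀ (L : List M), L ≠ [] → ∃ m ∈ L, ∀ l ∈ L, l = m ∨ ltM l m := by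
  intro L
  induction L with
  | nil => simp
  | cons a L ih =>
    intro _
    rcases eq_or_ne L [] with rfl | hL
    · exact ⟨a, by simp⟩
    · obtain ⟨m, hm, hmax⟩ := ih hL
      rcases h.tot a m with hlt | heq | hlt
      · refine ⟨m, by simp [hm], fun l hl => ?_⟩
        rcases List.mem_cons.mp hl with rfl | hl
        · exact Or.inr hlt
        · exact hmax l hl
      · refine ⟨m, by simp [hm], fun l hl => ?_⟩
        rcases List.mem_cons.mp hl with rfl | hl
        · exact Or.inl heq
        · exact hmax l hl
      · refine ⟨a, by simp, fun l hl => ?_⟩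
        rcases List.mem_cons.mp hl with rfl | hl
        · exact Or.inl rfl
        · rcases hmax l hl with rfl | hlm
          · exact Or.inr hlt
          · exact Or.inr (h.tr l m a hlm hlt)

theorem DLO.exists_min (h : DLO M) : ∀ (L : List M), L ≠ [] → ∃ m ∈ L, ∀ l ∈ L, l = m ∨ ltM m l := by
  intro L
  induction L with
  | nil => simp
  | cons a L ih =>
    intro _
    rcases eq_or_ne L [] with rfl | hL
    · exact ⟨a, by simp⟩
    · obtain ⟨m, hm, hmin⟩ := ih hL
      rcases h.tot a m with hlt | heq | hlt
      · refine ⟨a, by simp, fun l hl => ?_⟩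
        rcases List.mem_cons.mp hl with rfl | hl
        · exact Or.inl rfl
        · rcases hmin l hl with rfl | hlm
          · exact Or.inr hlt
          · exact Or.inr (h.tr a m l hlt hlm)
      · refine ⟨m, by simp [hm], fun l hl => ?_⟩
        rcases List.mem_cons.mp hl with rfl | hl
        · exact Or.inl heq
        · exact hmin l hl
      · refine ⟨m, by simp [hm], fun l hl => ?_⟩
        rcases List.mem_cons.mp hl with rfl | hl
        · exact Or.inr hlt
        · exact hmin l hl

/-- Between two finite lists, with all pairwise inequalities, there is an element, which can be
chosen to satisfy a further property `P` provided `P` can be found in every interval and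
unboundedly. -/
theorem DLO.exists_between_lists (h : DLO M) {P : M → Prop}
    (hdense : ∀ a b : M, ltM a b → ∃ z, P z ∧ ltM a z ∧ ltM z b)
    (hup : ∀ a : M, ∃ z, P z ∧ ltM a z)
    (hdown : ∀ a : M, ∃ z, P z ∧ ltM z a)
    (hsome : ∃ z : M, P z)
    (L U : List M) (hLU : ∀ l ∈ L, ∀ u ∈ U, ltM l u) :
    ∃ b : M, P b ∧ (∀ l ∈ L, ltM l b) ∧ ∀ u ∈ U, ltM b u := by
  rcases eq_or_ne L [] with rfl | hL
  · rcases eq_or_ne U [] with rfl | hU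
    · obtain ⟨z, hz⟩ := hsome
      exact ⟨z, hz, by simp, by simp⟩
    · obtain ⟨m, hm, hmin⟩ := h.exists_min U hU
      obtain ⟨z, hz⟩ := h.nomin m
      obtain ⟨b, hPb, _, hbz⟩ := hdense z m hz
      refine ⟨b, hPb, by simp, fun u hu => ?_⟩
      rcases hmin u hu with rfl | hmu
      · exact hbz
      · exact h.tr _ _ _ hbz hmu
  · obtain ⟨m, hm, hmax⟩ := h.exists_max L hL
    rcases eq_or_ne U [] with rfl | hU
    · obtain ⟨z, hz⟩ := h.nomax m
      obtain ⟨b, hPb, hmb, _⟩ := hdense m z hz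
      refine ⟨b, hPb, fun l hl => ?_, by simp⟩
      rcases hmax l hl with rfl | hlm
      · exact hmb
      · exact h.tr _ _ _ hlm hmb
    · obtain ⟨m', hm', hmin⟩ := h.exists_min U hU
      obtain ⟨b, hPb, hmb, hbm'⟩ := hdense m m' (hLU m hm m' hm')
      refine ⟨b, hPb, fun l hl => ?_, fun u hu => ?_⟩
      · rcases hmax l hl with rfl | hlm
        · exact hmb
        · exact h.tr _ _ _ hlm hmb
      · rcases hmin u hu with rfl | hmu
        · exact hbm'
        · exact h.tr _ _ _ hbm' hmu

end QEwork

namespace QEwork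

variable {M : Type*} [QLang.Structure M] {α : Type*} {n : ℕ}

inductive Trm (α : Type*) (n : ℕ) where
  | fv : α → Trm α n
  | bv : Fin n → Trm α n
  | c : ℚ → Trm α n

namespace Trm

def val (va : α → M) (xs : Fin n → M) : Trm α n → M
  | .fv a => va a
  | .bv i => xs i
  | .c q => cst q

def isLast : Trm α (n + 1) → Bool
  | .bv i => decide (i = Fin.last n)
  | _ => false

def down : Trm α (n + 1) → Option (Trm α n)
  | .fv a => some (.fv a)
  | .c q => some (.c q)
  | .bv i => Fin.lastCases none (fun j => some (.bv j)) i

def substLast (t₀ : Trm α n) : Trm α (n + 1) → Trm α n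
  | .fv a => .fv a
  | .c q => .c q
  | .bv i => Fin.lastCases t₀ (fun j => .bv j) i

theorem eq_bv_last_of_isLast {t : Trm α (n + 1)} (h : t.isLast = true) : t = .bv (Fin.last n) := by
  cases t with
  | fv a => simp [isLast] at h
  | c q => simp [isLast] at h
  | bv i => simp [isLast] at h; rw [h]

theorem down_isSome_of_not_isLast {t : Trm α (n + 1)} (h : t.isLast = false) :
    ∃ t', t.down = some t' := by
  cases t with
  | fv a => exact ⟨_, rfl⟩
  | c q => exact ⟨_, rfl⟩
  | bv i =>
    induction i using Fin.lastCases with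
    | last => simp [isLast] at h
    | cast j => exact ⟨.bv j, by simp [down, Fin.lastCases_castSucc]⟩

theorem val_of_down {t : Trm α (n + 1)} {t' : Trm α n} (h : t.down = some t')
    (va : α → M) (xs : Fin n → M) (b : M) :
    t.val va (Fin.snoc xs b) = t'.val va xs := by
  cases t with
  | fv a => simp [down] at h; subst h; rfl
  | c q => simp [down] at h; subst h; rfl
  | bv i =>
    induction i using Fin.lastCases with
    | last => simp [down, Fin.lastCases_last] at h
    | cast j =>
      simp only [down, Fin.lastCases_castSucc, Option.some.injEq] at h
      subst h
      simp [val, Fin.snoc_castSucc]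

theorem val_substLast (t₀ : Trm α n) (t : Trm α (n + 1)) (va : α → M) (xs : Fin n → M) :
    t.val va (Fin.snoc xs (t₀.val va xs)) = (Trm.substLast t₀ t).val va xs := by
  cases t with
  | fv a => rfl
  | c q => rfl
  | bv i =>
    induction i using Fin.lastCases with
    | last => simp [val, substLast, Fin.lastCases_last, Fin.snoc_last]
    | cast j => simp [val, substLast, Fin.lastCases_castSucc, Fin.snoc_castSucc]

theorem val_of_isLast {t : Trm α (n + 1)} (h : t.isLast = true)
    (va : α → M) (xs : Fin n → M) (b : M) :
    t.val va (Fin.snoc xs b) = b := by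
  rw [eq_bv_last_of_isLast h]
  simp [val]

end Trm

inductive Atom (α : Type*) (n : ℕ) where
  | lt : Trm α n → Trm α n → Atom α n
  | eq : Trm α n → Trm α n → Atom α n

namespace Atom

def val (va : α → M) (xs : Fin n → M) : Atom α n → Prop
  | .lt t s => ltM (t.val va xs) (s.val va xs)
  | .eq t s => t.val va xs = s.val va xs

def down : Atom α (n + 1) → Option (Atom α n)
  | .lt t s => do pure (.lt (← t.down) (← s.down))
  | .eq t s => do pure (.eq (← t.down) (← s.down))

def substLast (t₀ : Trm α n) : Atom α (n + 1) → Atom α n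
  | .lt t s => .lt (Trm.substLast t₀ t) (Trm.substLast t₀ s)
  | .eq t s => .eq (Trm.substLast t₀ t) (Trm.substLast t₀ s)

theorem val_of_down {a : Atom α (n + 1)} {a' : Atom α n} (h : a.down = some a')
    (va : α → M) (xs : Fin n → M) (b : M) :
    a.val va (Fin.snoc xs b) ↔ a'.val va xs := by
  cases a with
  | lt t s =>
    simp only [down, Option.bind_eq_bind, Option.bind_eq_some_iff, Option.pure_def,
      Option.some.injEq] at h
    obtain ⟨t', ht, s', hs, rfl⟩ := h
    simp [val, Trm.val_of_down ht, Trm.val_of_down hs]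
  | eq t s =>
    simp only [down, Option.bind_eq_bind, Option.bind_eq_some_iff, Option.pure_def,
      Option.some.injEq] at h
    obtain ⟨t', ht, s', hs, rfl⟩ := h
    simp [val, Trm.val_of_down ht, Trm.val_of_down hs]

theorem lt_down_isSome {t s : Trm α (n+1)} (ht : t.isLast = false) (hs : s.isLast = false) :
    ∃ a', (Atom.lt t s).down = some a' := by
  obtain ⟨t', ht'⟩ := Trm.down_isSome_of_not_isLast ht
  obtain ⟨s', hs'⟩ := Trm.down_isSome_of_not_isLast hs
  exact ⟨.lt t' s', by simp [down, ht', hs']⟩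

theorem eq_down_isSome {t s : Trm α (n+1)} (ht : t.isLast = false) (hs : s.isLast = false) :
    ∃ a', (Atom.eq t s).down = some a' := by
  obtain ⟨t', ht'⟩ := Trm.down_isSome_of_not_isLast ht
  obtain ⟨s', hs'⟩ := Trm.down_isSome_of_not_isLast hs
  exact ⟨.eq t' s', by simp [down, ht', hs']⟩

theorem val_substLast (t₀ : Trm α n) (a : Atom α (n + 1)) (va : α → M) (xs : Fin n → M) :
    a.val va (Fin.snoc xs (t₀.val va xs)) ↔ (Atom.substLast t₀ a).val va xs := by
  cases a with
  | lt t s => simp [val, substLast, Trm.val_substLast]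
  | eq t s => simp [val, substLast, Trm.val_substLast]

end Atom

abbrev Conj (α : Type*) (n : ℕ) := List (Atom α n)

abbrev NF (α : Type*) (n : ℕ) := List (Conj α n)

def Conj.val (va : α → M) (xs : Fin n → M) (cj : Conj α n) : Prop :=
  ∀ a ∈ cj, Atom.val va xs a

def NF.val (va : α → M) (xs : Fin n → M) (d : NF α n) : Prop :=
  ∃ cj ∈ d, Conj.val va xs cj

def NF.or (d₁ d₂ : NF α n) : NF α n := d₁ ++ d₂

def NF.and (d₁ d₂ : NF α n) : NF α n := d₁.flatMap fun c₁ => d₂.map fun c₂ => c₁ ++ c₂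

def negAtom : Atom α n → NF α n
  | .lt t s => [ [.lt s t], [.eq t s] ]
  | .eq t s => [ [.lt t s], [.lt s t] ]

def NF.not (d : NF α n) : NF α n :=
  d.foldr (fun cj acc => NF.and (cj.flatMap negAtom) acc) [ [] ]

theorem NF.val_or (d₁ d₂ : NF α n) (va : α → M) (xs : Fin n → M) :
    (NF.or d₁ d₂).val va xs ↔ d₁.val va xs ∨ d₂.val va xs := by
  simp [NF.or, NF.val, List.mem_append, or_and_right, exists_or]

theorem NF.val_and (d₁ d₂ : NF α n) (va : α → M) (xs : Fin n → M) :
    (NF.and d₁ d₂).val va xs ↔ d₁.val va xs ∧ d₂.val va xs := by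
  simp only [NF.and, NF.val, List.mem_flatMap, List.mem_map]
  constructor
  · rintro ⟨cj, ⟨c₁, hc₁, c₂, hc₂, rfl⟩, hval⟩
    exact ⟨⟨c₁, hc₁, fun a ha => hval a (List.mem_append.mpr (Or.inl ha))⟩,
      ⟨c₂, hc₂, fun a ha => hval a (List.mem_append.mpr (Or.inr ha))⟩⟩
  · rintro ⟨⟨c₁, hc₁, h₁⟩, ⟨c₂, hc₂, h₂⟩⟩
    refine ⟨c₁ ++ c₂, ⟨c₁, hc₁, c₂, hc₂, rfl⟩, fun a ha => ?_⟩
    rcases List.mem_append.mp ha with h | h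
    · exact h₁ a h
    · exact h₂ a h

theorem val_negAtom (h : DLO M) (a : Atom α n) (va : α → M) (xs : Fin n → M) :
    (negAtom a).val va xs ↔ ¬ a.val va xs := by
  cases a with
  | lt t s =>
    simp only [negAtom, NF.val, Conj.val, List.mem_cons, List.mem_singleton]
    constructor
    · rintro ⟨cj, (rfl | rfl | h), hval⟩
      · have := hval _ (List.mem_singleton_self _)
        exact h.asymm this
      · have := hval _ (List.mem_singleton_self _)
        simp only [Atom.val] at this ⊢
        rw [this]; exact h.irr _
      · simp at h
    · intro hn
      rcases h.tot (Trm.val va xs t) (Trm.val va xs s) with hlt | heq | hlt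
      · exact absurd hlt hn
      · refine ⟨[.eq t s], Or.inr (Or.inl rfl), fun a ha => ?_⟩
        rw [List.mem_singleton] at ha; subst ha; exact heq
      · refine ⟨[.lt s t], Or.inl rfl, fun a ha => ?_⟩
        rw [List.mem_singleton] at ha; subst ha; exact hlt
  | eq t s =>
    simp only [negAtom, NF.val, Conj.val, List.mem_cons, List.mem_singleton]
    constructor
    · rintro ⟨cj, (rfl | rfl | h), hval⟩
      · have := hval _ (List.mem_singleton_self _)
        exact fun he => h.ne this he
      · have := hval _ (List.mem_singleton_self _)
        exact fun he => h.ne this he.symm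
      · simp at h
    · intro hn
      rcases h.tot (Trm.val va xs t) (Trm.val va xs s) with hlt | heq | hlt
      · refine ⟨[.lt t s], Or.inl rfl, fun a ha => ?_⟩
        rw [List.mem_singleton] at ha; subst ha; exact hlt
      · exact absurd heq hn
      · refine ⟨[.lt s t], Or.inr (Or.inl rfl), fun a ha => ?_⟩
        rw [List.mem_singleton] at ha; subst ha; exact hlt

theorem val_negConj (h : DLO M) (cj : Conj α n) (va : α → M) (xs : Fin n → M) :
    NF.val va xs (cj.flatMap negAtom) ↔ ¬ Conj.val va xs cj := by
  simp only [NF.val, List.mem_flatMap, Conj.val, not_forall]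
  constructor
  · rintro ⟨cj', ⟨a, ha, hcj'⟩, hval⟩
    exact ⟨a, ha, (val_negAtom h a va xs).mp ⟨cj', hcj', hval⟩⟩
  · rintro ⟨a, ha, hna⟩
    obtain ⟨cj', hcj', hval⟩ := (val_negAtom h a va xs).mpr hna
    exact ⟨cj', ⟨a, ha, hcj'⟩, hval⟩

theorem NF.val_not (h : DLO M) (d : NF α n) (va : α → M) (xs : Fin n → M) :
    (NF.not d).val va xs ↔ ¬ d.val va xs := by
  induction d with
  | nil => simp [NF.not, NF.val, Conj.val]
  | cons cj d ih =>
    simp only [NF.not, List.foldr_cons] at *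
    rw [NF.val_and, ih, val_negConj h]
    constructor
    · rintro ⟨h1, h2⟩ ⟨c, hc, hval⟩
      rcases List.mem_cons.mp hc with rfl | hc
      · exact h1 hval
      · exact h2 ⟨c, hc, hval⟩
    · intro hn
      exact ⟨fun hv => hn ⟨cj, List.mem_cons_self, hv⟩,
        fun hv2 => by obtain ⟨c, hc, hv⟩ := hv2; exact hn ⟨c, List.mem_cons_of_mem _ hc, hv⟩⟩

end QEwork

namespace QEwork

variable {M : Type*} [QLang.Structure M] {α : Type*} {n : ℕ}

def findSubst (cj : Conj α (n + 1)) : Option (Trm α n) :=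
  cj.findSome? fun a => match a with
    | .eq t s => if t.isLast then s.down else if s.isLast then t.down else none
    | _ => none

def hasLtLastLast (cj : Conj α (n + 1)) : Bool :=
  cj.any fun a => match a with
    | .lt t s => t.isLast && s.isLast
    | _ => false

def lows (cj : Conj α (n + 1)) : List (Trm α n) :=
  cj.filterMap fun a => match a with
    | .lt t s => if s.isLast then t.down else none
    | _ => none

def ups (cj : Conj α (n + 1)) : List (Trm α n) :=
  cj.filterMap fun a => match a with
    | .lt t s => if t.isLast then s.down else none
    | _ => none

def frees (cj : Conj α (n + 1)) : Conj α n := cj.filterMap Atom.down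

def exElimConj (cj : Conj α (n + 1)) : NF α n :=
  match findSubst cj with
  | some t₀ => [cj.map (Atom.substLast t₀)]
  | none =>
    if hasLtLastLast cj then []
    else [frees cj ++ (lows cj).flatMap fun l => (ups cj).map fun u => Atom.lt l u]

theorem NF.val_singleton (cj : Conj α n) (va : α → M) (xs : Fin n → M) :
    NF.val va xs [cj] ↔ Conj.val va xs cj := by
  simp [NF.val]

theorem eq_subst_of_findSubst {cj : Conj α (n + 1)} {t₀ : Trm α n}
    (hfs : findSubst cj = some t₀) {va : α → M} {xs : Fin n → M} {b : M}
    (hb : Conj.val va (Fin.snoc xs b) cj) : b = t₀.val va xs := by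
  obtain ⟨a, ha, hfa⟩ := List.exists_of_findSome?_eq_some hfs
  cases a with
  | lt t s => simp at hfa
  | eq t s =>
    have hval := hb _ ha
    simp only [Atom.val] at hval
    replace hfa : (if t.isLast then s.down else if s.isLast then t.down else none) = some t₀ :=
      hfa
    by_cases ht : t.isLast
    · rw [if_pos ht] at hfa
      rw [Trm.val_of_isLast ht va xs b, Trm.val_of_down hfa va xs b] at hval
      exact hval
    · rw [if_neg ht] at hfa
      by_cases hs : s.isLast
      · rw [if_pos hs] at hfa
        rw [Trm.val_of_isLast hs va xs b, Trm.val_of_down hfa va xs b] at hval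
        exact hval.symm
      · rw [if_neg hs] at hfa; simp at hfa

theorem conj_val_subst (t₀ : Trm α n) (cj : Conj α (n + 1)) (va : α → M) (xs : Fin n → M) :
    Conj.val va (Fin.snoc xs (t₀.val va xs)) cj ↔
      Conj.val va xs (cj.map (Atom.substLast t₀)) := by
  simp only [Conj.val, List.mem_map]
  constructor
  · rintro hv a' ⟨a, ha, rfl⟩
    exact (Atom.val_substLast t₀ a va xs).mp (hv a ha)
  · intro hv a ha
    exact (Atom.val_substLast t₀ a va xs).mpr (hv _ ⟨a, ha, rfl⟩)

theorem conj_val_decomp {cj : Conj α (n + 1)} {va : α → M} {xs : Fin n → M} {b : M}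
    (hb : Conj.val va (Fin.snoc xs b) cj) :
    Conj.val va xs (frees cj) ∧ (∀ l ∈ lows cj, ltM (l.val va xs) b) ∧
      (∀ u ∈ ups cj, ltM b (u.val va xs)) := by
  refine ⟨?_, ?_, ?_⟩
  · intro a' ha'
    obtain ⟨a, ha, hda⟩ := List.mem_filterMap.mp ha'
    exact (Atom.val_of_down hda va xs b).mp (hb a ha)
  · intro l hl
    obtain ⟨a, ha, hda⟩ := List.mem_filterMap.mp hl
    cases a with
    | eq t s => simp at hda
    | lt t s =>
      simp only at hda
      by_cases hs : s.isLast
      · rw [if_pos hs] at hda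
        have := hb _ ha
        simp only [Atom.val] at this
        rwa [Trm.val_of_isLast hs va xs b, Trm.val_of_down hda va xs b] at this
      · rw [if_neg hs] at hda; simp at hda
  · intro u hu
    obtain ⟨a, ha, hda⟩ := List.mem_filterMap.mp hu
    cases a with
    | eq t s => simp at hda
    | lt t s =>
      simp only at hda
      by_cases ht : t.isLast
      · rw [if_pos ht] at hda
        have := hb _ ha
        simp only [Atom.val] at this
        rwa [Trm.val_of_isLast ht va xs b, Trm.val_of_down hda va xs b] at this
      · rw [if_neg ht] at hda; simp at hda

theorem conj_val_of_bounds {cj : Conj α (n + 1)} (hfs : findSubst cj = none)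
    (hg : hasLtLastLast cj = false) {va : α → M} {xs : Fin n → M} {b : M}
    (hfree : Conj.val va xs (frees cj))
    (hlow : ∀ l ∈ lows cj, ltM (l.val va xs) b)
    (hup : ∀ u ∈ ups cj, ltM b (u.val va xs)) :
    Conj.val va (Fin.snoc xs b) cj := by
  have hfs' := List.findSome?_eq_none_iff.mp hfs
  have hg' := List.any_eq_false.mp hg
  intro a ha
  cases a with
  | eq t s =>
    have hfa := hfs' _ ha
    simp only at hfa
    by_cases ht : t.isLast
    · rw [if_pos ht] at hfa
      by_cases hs : s.isLast
      · simp only [Atom.val]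
        rw [Trm.val_of_isLast ht va xs b, Trm.val_of_isLast hs va xs b]
      · obtain ⟨s', hs'⟩ := Trm.down_isSome_of_not_isLast (by simpa using hs)
        rw [hs'] at hfa; simp at hfa
    · rw [if_neg ht] at hfa
      by_cases hs : s.isLast
      · rw [if_pos hs] at hfa
        obtain ⟨t', ht'⟩ := Trm.down_isSome_of_not_isLast (by simpa using ht)
        rw [ht'] at hfa; simp at hfa
      · obtain ⟨a', hda⟩ := Atom.eq_down_isSome (t := t) (s := s)
          (by simpa using ht) (by simpa using hs)
        refine (Atom.val_of_down hda va xs b).mpr ?_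
        exact hfree a' (List.mem_filterMap.mpr ⟨_, ha, hda⟩)
  | lt t s =>
    have hga := hg' _ ha
    simp only at hga
    by_cases ht : t.isLast
    · by_cases hs : s.isLast
      · rw [ht, hs] at hga; simp at hga
      · obtain ⟨s', hs'⟩ := Trm.down_isSome_of_not_isLast (by simpa using hs)
        have hmem : s' ∈ ups cj := List.mem_filterMap.mpr ⟨_, ha, by
          simp only; rw [if_pos ht]; exact hs'⟩
        simp only [Atom.val]
        rw [Trm.val_of_isLast ht va xs b, Trm.val_of_down hs' va xs b]
        exact hup s' hmem
    · by_cases hs : s.isLast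
      · obtain ⟨t', ht'⟩ := Trm.down_isSome_of_not_isLast (by simpa using ht)
        have hmem : t' ∈ lows cj := List.mem_filterMap.mpr ⟨_, ha, by
          simp only; rw [if_pos hs]; exact ht'⟩
        simp only [Atom.val]
        rw [Trm.val_of_isLast hs va xs b, Trm.val_of_down ht' va xs b]
        exact hlow t' hmem
      · obtain ⟨a', hda⟩ := Atom.lt_down_isSome (t := t) (s := s)
          (by simpa using ht) (by simpa using hs)
        refine (Atom.val_of_down hda va xs b).mpr ?_
        exact hfree a' (List.mem_filterMap.mpr ⟨_, ha, hda⟩)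

theorem exElimConj_spec (h : DLO M) (cj : Conj α (n + 1)) (va : α → M) (xs : Fin n → M) :
    (∃ b, Conj.val va (Fin.snoc xs b) cj) ↔ NF.val va xs (exElimConj cj) := by
  unfold exElimConj
  rcases hfs : findSubst cj with _ | t₀
  · by_cases hg : hasLtLastLast cj
    · rw [if_pos hg]
      simp only [NF.val, List.not_mem_nil, false_and, exists_false, iff_false]
      rintro ⟨b, hb⟩
      obtain ⟨a, ha, hma⟩ := List.any_eq_true.mp hg
      cases a with
      | eq t s => simp at hma
      | lt t s =>
        simp only [Bool.and_eq_true] at hma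
        have := hb _ ha
        simp only [Atom.val] at this
        rw [Trm.val_of_isLast hma.1 va xs b, Trm.val_of_isLast hma.2 va xs b] at this
        exact h.irr b this
    · rw [if_neg hg, NF.val_singleton]
      constructor
      · rintro ⟨b, hb⟩
        obtain ⟨hfree, hlow, hup⟩ := conj_val_decomp hb
        intro a' ha'
        rcases List.mem_append.mp ha' with hmem | hmem
        · exact hfree a' hmem
        · obtain ⟨l, hl, a'', ha'', rfl⟩ := by
            simpa only [List.mem_flatMap, List.mem_map] using hmem
          simp only [Atom.val]
          exact h.tr _ b _ (hlow l hl) (hup _ ha'')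
      · intro hv
        have hfree : Conj.val va xs (frees cj) := fun a ha =>
          hv a (List.mem_append.mpr (Or.inl ha))
        have hpairs : ∀ l ∈ (lows cj).map (Trm.val va xs),
            ∀ u ∈ (ups cj).map (Trm.val va xs), ltM l u := by
          rintro l hl u hu
          obtain ⟨l', hl', rfl⟩ := List.mem_map.mp hl
          obtain ⟨u', hu', rfl⟩ := List.mem_map.mp hu
          have := hv (Atom.lt l' u') (List.mem_append.mpr (Or.inr
            (List.mem_flatMap.mpr ⟨l', hl', List.mem_map.mpr ⟨u', hu', rfl⟩⟩)))
          exact this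
        obtain ⟨b, _, hlb, hbu⟩ := h.exists_between_lists (P := fun _ => True)
          (fun a b hab => by obtain ⟨z, h1, h2⟩ := h.dense a b hab; exact ⟨z, trivial, h1, h2⟩)
          (fun a => by obtain ⟨z, hz⟩ := h.nomax a; exact ⟨z, trivial, hz⟩)
          (fun a => by obtain ⟨z, hz⟩ := h.nomin a; exact ⟨z, trivial, hz⟩)
          ⟨cst 0, trivial⟩ _ _ hpairs
        refine ⟨b, conj_val_of_bounds hfs (by simpa using hg) hfree ?_ ?_⟩
        · intro l hl
          exact hlb _ (List.mem_map.mpr ⟨l, hl, rfl⟩)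
        · intro u hu
          exact hbu _ (List.mem_map.mpr ⟨u, hu, rfl⟩)
  · rw [NF.val_singleton]
    constructor
    · rintro ⟨b, hb⟩
      have hbe := eq_subst_of_findSubst hfs hb
      subst hbe
      exact (conj_val_subst t₀ cj va xs).mp hb
    · intro hv
      exact ⟨t₀.val va xs, (conj_val_subst t₀ cj va xs).mpr hv⟩

def exElimNF (d : NF α (n + 1)) : NF α n := d.flatMap exElimConj

theorem exElimNF_spec (h : DLO M) (d : NF α (n + 1)) (va : α → M) (xs : Fin n → M) :
    (∃ b, NF.val va (Fin.snoc xs b) d) ↔ NF.val va xs (exElimNF d) := by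
  simp only [NF.val, exElimNF, List.mem_flatMap]
  constructor
  · rintro ⟨b, cj, hcj, hval⟩
    obtain ⟨cj', hcj', hval'⟩ := (exElimConj_spec h cj va xs).mp ⟨b, hval⟩
    exact ⟨cj', ⟨cj, hcj, hcj'⟩, hval'⟩
  · rintro ⟨cj', ⟨cj, hcj, hcj'⟩, hval'⟩
    obtain ⟨b, hb⟩ := (exElimConj_spec h cj va xs).mpr ⟨cj', hcj', hval'⟩
    exact ⟨b, cj, hcj, hb⟩

end QEwork

namespace QEwork

variable {M : Type*} [QLang.Structure M] {α : Type*} {n : ℕ}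

theorem relMap_pair (v : Fin 2 → M) :
    Structure.RelMap (L := QLang) QRel.lt v ↔ ltM (v 0) (v 1) := by
  have hv : v = ![v 0, v 1] := by
    funext i
    fin_cases i <;> rfl
  rw [ltM, ← hv]

def ofTerm : QLang.Term (α ⊕ Fin n) → Trm α n
  | .var (Sum.inl a) => .fv a
  | .var (Sum.inr i) => .bv i
  | @FirstOrder.Language.Term.func _ _ 0 q _ => .c q
  | @FirstOrder.Language.Term.func _ _ (_ + 1) f _ => Empty.elim f

theorem realize_ofTerm (t : QLang.Term (α ⊕ Fin n)) (va : α → M) (xs : Fin n → M) :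
    t.realize (Sum.elim va xs) = (ofTerm t).val va xs := by
  match t with
  | .var (Sum.inl a) => rfl
  | .var (Sum.inr i) => rfl
  | @FirstOrder.Language.Term.func _ _ 0 q ts =>
    show Structure.funMap q _ = cst q
    unfold cst
    congr 1
    exact Subsingleton.elim _ _
  | @FirstOrder.Language.Term.func _ _ (_ + 1) f ts => exact Empty.elim f

def nfOfFormula : ∀ {n : ℕ}, QLang.BoundedFormula α n → NF α n
  | _, .falsum => []
  | _, .equal t₁ t₂ => [ [Atom.eq (ofTerm t₁) (ofTerm t₂)] ]
  | _, @FirstOrder.Language.BoundedFormula.rel _ _ _ _ R ts =>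
      match R with
      | .lt => [ [Atom.lt (ofTerm (ts 0)) (ofTerm (ts 1))] ]
  | _, .imp φ ψ => NF.or (NF.not (nfOfFormula φ)) (nfOfFormula ψ)
  | _, .all φ => NF.not (exElimNF (NF.not (nfOfFormula φ)))

theorem nfOfFormula_spec (h : DLO M) :
    ∀ {n : ℕ} (φ : QLang.BoundedFormula α n) (va : α → M) (xs : Fin n → M),
      φ.Realize va xs ↔ NF.val va xs (nfOfFormula φ) := by
  intro n φ
  induction φ with
  | falsum =>
    intro va xs
    simp [nfOfFormula, NF.val, BoundedFormula.Realize]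
  | equal t₁ t₂ =>
    intro va xs
    show t₁.realize (Sum.elim va xs) = t₂.realize (Sum.elim va xs) ↔ _
    rw [realize_ofTerm, realize_ofTerm, nfOfFormula, NF.val_singleton]
    simp [Conj.val, Atom.val]
  | rel R ts =>
    intro va xs
    cases R with
    | lt =>
      have h1 : (BoundedFormula.rel QRel.lt ts).Realize va xs ↔
          ltM ((ts 0).realize (Sum.elim va xs)) ((ts 1).realize (Sum.elim va xs)) :=
        relMap_pair fun i => (ts i).realize (Sum.elim va xs)
      have h2 : nfOfFormula (BoundedFormula.rel QRel.lt ts) =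
          [ [Atom.lt (ofTerm (ts 0)) (ofTerm (ts 1))] ] := rfl
      rw [h1, h2, NF.val_singleton]
      simp only [Conj.val, List.mem_singleton, forall_eq, Atom.val]
      rw [realize_ofTerm, realize_ofTerm]
  | imp φ ψ ihφ ihψ =>
    intro va xs
    rw [BoundedFormula.realize_imp, nfOfFormula, NF.val_or, NF.val_not h, ← ihφ, ← ihψ]
    tauto
  | all φ ih =>
    intro va xs
    rw [BoundedFormula.realize_all, nfOfFormula, NF.val_not h, ← exElimNF_spec h]
    rw [not_exists]
    constructor
    · intro hall b hnot
      rw [NF.val_not h] at hnot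
      exact hnot ((ih va (Fin.snoc xs b)).mp (hall b))
    · intro hnot b
      by_contra hb
      exact hnot b ((NF.val_not h _ _ _).mpr fun hv => hb ((ih va (Fin.snoc xs b)).mpr hv))

end QEwork

namespace QEwork

variable {M : Type*} [QLang.Structure M]

def vt {k : ℕ} (i : Fin k) : QLang.Term (Empty ⊕ Fin k) := Term.var (Sum.inr i)

def ct {β : Type*} (q : ℚ) : QLang.Term β := @Term.func QLang β 0 q ![]

theorem realize_ct {β : Type*} (q : ℚ) (v : β → M) : (ct q).realize v = cst q := by
  show Structure.funMap (L := QLang) (n := 0) q _ = cst q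
  unfold cst
  congr 1
  exact Subsingleton.elim _ _

def ltF {k : ℕ} (t s : QLang.Term (Empty ⊕ Fin k)) : QLang.BoundedFormula Empty k :=
  BoundedFormula.rel QRel.lt ![t, s]

theorem realize_ltF {k : ℕ} (t s : QLang.Term (Empty ⊕ Fin k)) (va : Empty → M)
    (xs : Fin k → M) :
    (ltF t s).Realize va xs ↔ ltM (t.realize (Sum.elim va xs)) (s.realize (Sum.elim va xs)) :=
  relMap_pair fun i => (![t, s] i).realize (Sum.elim va xs)

def σirr : QLang.Sentence := BoundedFormula.all (BoundedFormula.not (ltF (vt 0) (vt 0)))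

def σtr : QLang.Sentence :=
  (((ltF (vt 0) (vt 1)).imp ((ltF (vt 1) (vt 2)).imp (ltF (vt 0) (vt 2)))).all).all.all

def σtot : QLang.Sentence :=
  (((ltF (vt 0) (vt 1) ⊔ ((vt 0).bdEqual (vt 1) ⊔ ltF (vt 1) (vt 0))).all).all)

def σdense : QLang.Sentence :=
  (((ltF (vt 0) (vt 1)).imp ((ltF (vt 0) (vt 2) ⊓ ltF (vt 2) (vt 1))).ex).all).all

def σnomax : QLang.Sentence := ((ltF (vt 0) (vt 1)).ex).all

def σnomin : QLang.Sentence := ((ltF (vt 1) (vt 0)).ex).all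

def σclt (p q : ℚ) : QLang.Sentence := ltF (ct p) (ct q)

theorem realize_σirr : (M ⊨ σirr) ↔ ∀ a : M, ¬ ltM a a := by
  simp only [σirr, Sentence.Realize, Formula.Realize, BoundedFormula.realize_all,
    BoundedFormula.realize_not, realize_ltF]
  refine forall_congr' fun a => ?_
  rw [show Term.realize (Sum.elim default (Fin.snoc default a)) (vt 0) = a by
    simp [vt, Fin.snoc] ]

theorem realize_σtr : (M ⊨ σtr) ↔ ∀ a b c : M, ltM a b → ltM b c → ltM a c := by
  simp only [σtr, Sentence.Realize, Formula.Realize, BoundedFormula.realize_all,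
    BoundedFormula.realize_imp, realize_ltF]
  refine forall_congr' fun a => forall_congr' fun b => forall_congr' fun c => ?_
  simp [vt, Fin.snoc]

theorem realize_σtot : (M ⊨ σtot) ↔ ∀ a b : M, ltM a b ∨ a = b ∨ ltM b a := by
  simp only [σtot, Sentence.Realize, Formula.Realize, BoundedFormula.realize_all,
    BoundedFormula.realize_sup, BoundedFormula.realize_bdEqual, realize_ltF]
  refine forall_congr' fun a => forall_congr' fun b => ?_
  simp [vt, Fin.snoc]

theorem realize_σdense : (M ⊨ σdense) ↔ ∀ a b : M, ltM a b → ∃ z, ltM a z ∧ ltM z b := by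
  simp only [σdense, Sentence.Realize, Formula.Realize, BoundedFormula.realize_all,
    BoundedFormula.realize_imp, BoundedFormula.realize_ex, BoundedFormula.realize_inf,
    realize_ltF]
  refine forall_congr' fun a => forall_congr' fun b => ?_
  simp [vt, Fin.snoc]

theorem realize_σnomax : (M ⊨ σnomax) ↔ ∀ a : M, ∃ b, ltM a b := by
  simp only [σnomax, Sentence.Realize, Formula.Realize, BoundedFormula.realize_all,
    BoundedFormula.realize_ex, realize_ltF]
  refine forall_congr' fun a => exists_congr fun b => ?_
  simp [vt, Fin.snoc]

theorem realize_σnomin : (M ⊨ σnomin) ↔ ∀ a : M, ∃ b, ltM b a := by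
  simp only [σnomin, Sentence.Realize, Formula.Realize, BoundedFormula.realize_all,
    BoundedFormula.realize_ex, realize_ltF]
  refine forall_congr' fun a => exists_congr fun b => ?_
  simp [vt, Fin.snoc]

theorem realize_σclt (p q : ℚ) : (M ⊨ σclt p q) ↔ ltM (cst p : M) (cst q) := by
  simp only [σclt, Sentence.Realize, Formula.Realize, realize_ltF, realize_ct]

theorem formula_realize_congr {N : Type*} [QLang.Structure N] {β : Type*}
    (φ : QLang.Formula β) {v w : β → N} (h : ∀ a, v a = w a) :
    φ.Realize v ↔ φ.Realize w :=
  iff_of_eq (congrArg (fun v => Formula.Realize φ v) (funext h))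

theorem realize_substConst {β : Type*} (φ : QLang.Formula β) (w : β → ℚ)
    (N : Type*) [QLang.Structure N] :
    (N ⊨ (φ.subst fun a => ct (w a) : QLang.Sentence)) ↔
      φ.Realize (fun a => (cst (w a) : N)) := by
  have h0 : (N ⊨ (φ.subst fun a => ct (w a) : QLang.Sentence)) ↔
      Formula.Realize (φ.subst fun a => ct (w a)) (default : Empty → N) := Iff.rfl
  rw [h0, Formula.Realize, BoundedFormula.realize_subst]
  exact formula_realize_congr φ fun a => realize_ct (w a) default

def exS (φ : QLang.Formula (Fin 1)) : QLang.Sentence :=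
  BoundedFormula.ex
    (BoundedFormula.relabel (fun _ : Fin 1 => (Sum.inr 0 : Empty ⊕ Fin 1)) φ)

theorem realize_exS (φ : QLang.Formula (Fin 1)) (N : Type*) [QLang.Structure N] :
    (N ⊨ exS φ) ↔ ∃ a : N, φ.Realize fun _ => a := by
  rw [show (N ⊨ exS φ) ↔ BoundedFormula.Realize (exS φ) (default : Empty → N) default from
    Iff.rfl, exS, BoundedFormula.realize_ex]
  refine exists_congr fun a => ?_
  rw [BoundedFormula.realize_relabel]
  have hv : (Sum.elim (default : Empty → N)
      ((Fin.snoc (default : Fin 0 → N) a) ∘ Fin.castAdd 0) ∘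
        fun _ : Fin 1 => (Sum.inr 0 : Empty ⊕ Fin 1)) = fun _ : Fin 1 => a := by
    funext i
    simp [Fin.snoc]
  rw [hv]
  exact iff_of_eq (congrArg (fun xs => BoundedFormula.Realize φ (fun _ : Fin 1 => a) xs)
    (Subsingleton.elim _ _))

section Transfer

variable (M) [M ⊨ QLang.completeTheory ℚ]

theorem dlo_transfer : DLO M where
  irr := realize_σirr.mp ((realize_iff_of_model_completeTheory ℚ M σirr).mpr
    (realize_σirr.mpr dloQ.irr))
  tr := realize_σtr.mp ((realize_iff_of_model_completeTheory ℚ M σtr).mpr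
    (realize_σtr.mpr dloQ.tr))
  tot := realize_σtot.mp ((realize_iff_of_model_completeTheory ℚ M σtot).mpr
    (realize_σtot.mpr dloQ.tot))
  dense := realize_σdense.mp ((realize_iff_of_model_completeTheory ℚ M σdense).mpr
    (realize_σdense.mpr dloQ.dense))
  nomax := realize_σnomax.mp ((realize_iff_of_model_completeTheory ℚ M σnomax).mpr
    (realize_σnomax.mpr dloQ.nomax))
  nomin := realize_σnomin.mp ((realize_iff_of_model_completeTheory ℚ M σnomin).mpr
    (realize_σnomin.mpr dloQ.nomin))

theorem cst_lt_cst {p q : ℚ} (hpq : p < q) : ltM (cst p : M) (cst q) :=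
  (realize_σclt p q).mp ((realize_iff_of_model_completeTheory ℚ M (σclt p q)).mpr
    ((realize_σclt p q).mpr (by rw [cstQ, cstQ]; exact hpq)))

theorem cst_injective : Function.Injective (cst : ℚ → M) := by
  intro p q hpq
  by_contra hne
  rcases lt_or_gt_of_ne hne with h | h
  · exact (dlo_transfer M).irr _ (hpq ▸ cst_lt_cst M h)
  · exact (dlo_transfer M).irr _ (hpq ▸ cst_lt_cst M h)

/-- The map `q ↦ cst q` is elementary. -/
theorem jelem {β : Type*} (φ : QLang.Formula β) (w : β → ℚ) :
    φ.Realize (fun a => (cst (w a) : M)) ↔ φ.Realize w := by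
  have h2 := realize_iff_of_model_completeTheory ℚ M (φ.subst fun a => ct (w a))
  rw [realize_substConst φ w M, realize_substConst φ w ℚ] at h2
  rw [h2]
  exact formula_realize_congr φ fun a => cstQ (w a)

theorem ex_transfer (φ : QLang.Formula (Fin 1)) :
    (∃ a : M, φ.Realize fun _ => a) ↔ ∃ q : ℚ, φ.Realize fun _ => (q : ℚ) := by
  rw [← realize_exS φ M, ← realize_exS φ ℚ]
  exact realize_iff_of_model_completeTheory ℚ M _

end Transfer

end QEwork
namespace QEwork

variable {M : Type*} [QLang.Structure M]

def SameCut (a b : M) : Prop :=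
  ∀ q : ℚ, (ltM (cst q) a ↔ ltM (cst q) b) ∧ (ltM a (cst q) ↔ ltM b (cst q)) ∧
    (a = cst q ↔ b = cst q)

theorem atom_cut (h : DLO M) {a b : M} (hc : SameCut a b) (A : Atom (Fin 1) 0)
    (xs : Fin 0 → M) : A.val (fun _ => a) xs ↔ A.val (fun _ => b) xs := by
  cases A with
  | lt t s =>
    cases t with
    | bv i => exact i.elim0
    | fv _ =>
      cases s with
      | bv i => exact i.elim0
      | fv _ => exact iff_of_false (h.irr a) (h.irr b)
      | c q => exact (hc q).2.1
    | c q =>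
      cases s with
      | bv i => exact i.elim0
      | fv _ => exact (hc q).1
      | c q' => exact Iff.rfl
  | eq t s =>
    cases t with
    | bv i => exact i.elim0
    | fv _ =>
      cases s with
      | bv i => exact i.elim0
      | fv _ => exact iff_of_true rfl rfl
      | c q => exact (hc q).2.2
    | c q =>
      cases s with
      | bv i => exact i.elim0
      | fv _ =>
        constructor
        · intro he
          exact (((hc q).2.2).mp he.symm).symm
        · intro he
          exact (((hc q).2.2).mpr he.symm).symm
      | c q' => exact Iff.rfl

theorem nfval_cut (h : DLO M) {a b : M} (hc : SameCut a b) (d : NF (Fin 1) 0)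
    (xs : Fin 0 → M) : NF.val (fun _ => a) xs d ↔ NF.val (fun _ => b) xs d := by
  unfold NF.val Conj.val
  exact exists_congr fun cj => and_congr_right fun _ =>
    forall_congr' fun A => forall_congr' fun hA => atom_cut h hc A xs

theorem tp1_eq_of_sameCut (h : DLO M) {a b : M} (hc : SameCut a b) :
    tp1 QLang a = tp1 QLang b := by
  ext φ
  show BoundedFormula.Realize φ (fun _ => a) default ↔
    BoundedFormula.Realize φ (fun _ => b) default
  rw [nfOfFormula_spec h φ (fun _ => a) default, nfOfFormula_spec h φ (fun _ => b) default]
  exact nfval_cut h hc _ _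

theorem dense_cst (h : DLO M) (hsc : ∀ a b : M, SameCut a b → a = b) :
    ∀ a b : M, ltM a b → ∃ q, ltM a (cst q) ∧ ltM (cst q) b := by
  intro a b hab
  obtain ⟨z, haz, hzb⟩ := h.dense a b hab
  obtain ⟨z₂, hzz₂, hz₂b⟩ := h.dense z b hzb
  have hne : z ≠ z₂ := h.ne hzz₂
  have hnsc : ¬ SameCut z z₂ := fun hcut => hne (hsc _ _ hcut)
  rw [SameCut, not_forall] at hnsc
  obtain ⟨q, hq⟩ := hnsc
  refine ⟨q, ?_⟩
  by_cases h1 : ltM (cst q) z ↔ ltM (cst q) z₂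
  · by_cases h2 : ltM z (cst q) ↔ ltM z₂ (cst q)
    · by_cases h3 : z = cst q ↔ z₂ = cst q
      · exact absurd ⟨h1, h2, h3⟩ hq
      · -- h3 fails
        by_cases hz : z = cst q
        · have hz₂ : z₂ ≠ cst q := fun hh => h3 (iff_of_true hz hh)
          exact ⟨hz ▸ haz, h.tr _ _ _ (hz ▸ hzz₂) hz₂b⟩
        · have hz₂ : z₂ = cst q := by
            by_contra hh
            exact h3 (iff_of_false hz hh)
          exact ⟨h.tr _ _ _ haz (hz₂ ▸ hzz₂), hz₂ ▸ hz₂b⟩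
    · -- h2 fails
      by_cases hzc : ltM z (cst q)
      · have hz₂c : ¬ ltM z₂ (cst q) := fun hh => h2 (iff_of_true hzc hh)
        rcases h.tot z₂ (cst q) with hlt | heq | hlt
        · exact absurd hlt hz₂c
        · exact ⟨h.tr _ _ _ haz hzc, heq ▸ hz₂b⟩
        · exact ⟨h.tr _ _ _ haz hzc, h.tr _ _ _ hlt hz₂b⟩
      · have hz₂c : ltM z₂ (cst q) := by
          by_contra hh
          exact h2 (iff_of_false hzc hh)
        rcases h.tot z (cst q) with hlt | heq | hlt
        · exact absurd hlt hzc
        · exact ⟨heq ▸ haz, h.tr _ _ _ (heq ▸ hzz₂) hz₂b⟩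
        · exact absurd (h.tr _ _ _ hzz₂ hz₂c) (h.asymm hlt)
  · -- h1 fails
    by_cases hcz : ltM (cst q) z
    · have hcz₂ : ¬ ltM (cst q) z₂ := fun hh => h1 (iff_of_true hcz hh)
      exact absurd (h.tr _ _ _ hcz hzz₂) hcz₂
    · have hcz₂ : ltM (cst q) z₂ := by
        by_contra hh
        exact h1 (iff_of_false hcz hh)
      rcases h.tot (cst q) z with hlt | heq | hlt
      · exact absurd hlt hcz
      · exact ⟨heq ▸ haz, h.tr _ _ _ hcz₂ hz₂b⟩
      · exact ⟨h.tr _ _ _ haz hlt, h.tr _ _ _ hcz₂ hz₂b⟩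

theorem tv_lemma (h : DLO M)
    (hdc : ∀ a b : M, ltM a b → ∃ q, ltM a (cst q) ∧ ltM (cst q) b)
    {N : Set M} (hCN : Set.range (cst : ℚ → M) ⊆ N) :
    ∃ S : QLang.ElementarySubstructure M, (S : Set M) = N := by
  classical
  have hPdense : ∀ a b : M, ltM a b → ∃ z, (∃ q, z = cst q) ∧ ltM a z ∧ ltM z b := by
    intro a b hab
    obtain ⟨q, h1, h2⟩ := hdc a b hab
    exact ⟨cst q, ⟨q, rfl⟩, h1, h2⟩
  have hPup : ∀ a : M, ∃ z, (∃ q, z = cst q) ∧ ltM a z := by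
    intro a
    obtain ⟨u, hu⟩ := h.nomax a
    obtain ⟨q, h1, _⟩ := hdc a u hu
    exact ⟨cst q, ⟨q, rfl⟩, h1⟩
  have hPdown : ∀ a : M, ∃ z, (∃ q, z = cst q) ∧ ltM z a := by
    intro a
    obtain ⟨u, hu⟩ := h.nomin a
    obtain ⟨q, _, h2⟩ := hdc u a hu
    exact ⟨cst q, ⟨q, rfl⟩, h2⟩
  let S0 : QLang.Substructure M :=
    ⟨N, by
      intro n f
      match n, f with
      | 0, q =>
        intro x _
        rw [show Structure.funMap q x = cst q from congrArg _ (Subsingleton.elim _ _)]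
        exact hCN ⟨q, rfl⟩
      | n + 1, f => exact Empty.elim f⟩
  refine ⟨S0.toElementarySubstructure ?_, rfl⟩
  intro k φ x a hreal
  rw [nfOfFormula_spec h φ default (Fin.snoc ((↑) ∘ x) a)] at hreal
  obtain ⟨cj, hcj, hval⟩ := hreal
  rcases hfs : findSubst cj with _ | t₀
  · by_cases hg : hasLtLastLast cj
    · exfalso
      obtain ⟨A, hA, hmA⟩ := List.any_eq_true.mp hg
      cases A with
      | eq t s => simp at hmA
      | lt t s =>
        simp only [Bool.and_eq_true] at hmA
        have := hval _ hA
        simp only [Atom.val] at this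
        rw [Trm.val_of_isLast hmA.1, Trm.val_of_isLast hmA.2] at this
        exact h.irr a this
    · obtain ⟨hfree, hlow, hup⟩ := conj_val_decomp hval
      have hpairs : ∀ l ∈ (lows cj).map (Trm.val (default : Empty → M) (fun i => (x i : M))),
          ∀ u ∈ (ups cj).map (Trm.val (default : Empty → M) (fun i => (x i : M))), ltM l u := by
        rintro l hl u hu
        obtain ⟨l', hl', rfl⟩ := List.mem_map.mp hl
        obtain ⟨u', hu', rfl⟩ := List.mem_map.mp hu
        exact h.tr _ a _ (hlow l' hl') (hup u' hu')
      obtain ⟨b, ⟨q, rfl⟩, hlb, hbu⟩ := h.exists_between_lists hPdense hPup hPdown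
        ⟨cst 0, 0, rfl⟩ _ _ hpairs
      refine ⟨⟨cst q, hCN ⟨q, rfl⟩⟩, ?_⟩
      rw [nfOfFormula_spec h φ default]
      refine ⟨cj, hcj, conj_val_of_bounds hfs (by simpa using hg) hfree ?_ ?_⟩
      · intro l hl
        exact hlb _ (List.mem_map.mpr ⟨l, hl, rfl⟩)
      · intro u hu
        exact hbu _ (List.mem_map.mpr ⟨u, hu, rfl⟩)
  · have hba := eq_subst_of_findSubst hfs hval
    have hmem : Trm.val default ((↑) ∘ x) t₀ ∈ N := by
      cases t₀ with
      | fv e => exact e.elim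
      | bv i => exact (x i).2
      | c q => exact hCN ⟨q, rfl⟩
    refine ⟨⟨a, hba ▸ hmem⟩, ?_⟩
    rw [nfOfFormula_spec h φ default]
    exact ⟨cj, hcj, hval⟩

theorem isolated_of_cst (q : ℚ) : IsIsolated1 QLang M (tp1 QLang (cst q : M)) := by
  refine ⟨Term.equal (Term.var 0) (ct q), ?_, ?_⟩
  · show (Term.equal (Term.var (0 : Fin 1)) (ct q)).Realize (fun _ => (cst q : M))
    rw [Formula.realize_equal, realize_ct]
    rfl
  · intro ψ hψ y hy
    rw [Formula.realize_equal, realize_ct] at hy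
    have : y = cst q := hy
    rw [this]
    exact hψ

theorem not_isolated_of_not_cst [M ⊨ QLang.completeTheory ℚ] {a : M}
    (ha : a ∉ Set.range (cst : ℚ → M)) :
    ¬ IsIsolated1 QLang M (tp1 QLang a) := by
  rintro ⟨φ, hφ, himp⟩
  obtain ⟨q, hq⟩ := (ex_transfer M φ).mp ⟨a, hφ⟩
  have hcst : φ.Realize (fun _ => (cst q : M)) := (jelem M φ fun _ => q).mpr hq
  have hne : a ≠ cst q := fun he => ha ⟨q, he.symm⟩
  have hψ : (Formula.not (Term.equal (Term.var 0) (ct q))) ∈ tp1 QLang a := by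
    show ¬ (Term.equal (Term.var (0 : Fin 1)) (ct q)).Realize (fun _ => a)
    rw [Formula.realize_equal, realize_ct]
    exact hne
  have hcontra := himp _ hψ (cst q) hcst
  rw [Formula.realize_not, Formula.realize_equal, realize_ct] at hcontra
  exact hcontra rfl

end QEwork

universe u

open QEwork in
theorem stmt13 (M' : Type u) [QLang.Structure M']
    (hM' : M' ⊨ QLang.completeTheory ℚ)
    (huniq : ∀ a b : M', tp1 QLang a = tp1 QLang b → a = b)
    (lam : Cardinal)
    (hlam : lam = Cardinal.mk
      {p : Set (QLang.Formula (Fin 1)) //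
        (∃ a : M', p = tp1 QLang a) ∧ ¬ IsIsolated1 QLang M' p}) :
    Cardinal.mk (ESub QLang M') = 2 ^ Cardinal.lift.{u, 0} lam := by
  classical
  haveI : M' ⊨ QLang.completeTheory ℚ := hM'
  have h : DLO M' := dlo_transfer M'
  set C : Set M' := Set.range (cst : ℚ → M') with hCdef
  have hsc : ∀ a b : M', SameCut a b → a = b := fun a b hab =>
    huniq a b (tp1_eq_of_sameCut h hab)
  have hdc := dense_cst h hsc
  -- ESub is exactly the family of supersets of C
  have hE : ESub QLang M' = {N : Set M' | C ⊆ N} := by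
    ext N
    constructor
    · rintro ⟨S, rfl⟩ x ⟨q, rfl⟩
      exact S.toSubstructure.fun_mem (n := 0) q ![] (fun i => i.elim0)
    · intro hN
      exact tv_lemma h hdc hN
  rw [hE]
  -- the supersets of C biject with subsets of Cᶜ
  have e1 : {N : Set M' | C ⊆ N} ≃ Set (↥(Cᶜ)) :=
    { toFun := fun N => {x : ↥(Cᶜ) | ↑x ∈ (N : Set M')}
      invFun := fun S => ⟨C ∪ (Subtype.val '' S), subset_union_left⟩
      left_inv := by
        rintro ⟨N, hN⟩
        apply Subtype.ext
        ext x
        simp only [Set.mem_union, Set.mem_image, Set.mem_setOf_eq]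
        constructor
        · rintro (hxC | ⟨y, hy, rfl⟩)
          · exact hN hxC
          · exact hy
        · intro hxN
          by_cases hxC : x ∈ C
          · exact Or.inl hxC
          · exact Or.inr ⟨⟨x, hxC⟩, hxN, rfl⟩
      right_inv := by
        intro S
        ext x
        simp only [Set.mem_setOf_eq, Set.mem_union, Set.mem_image]
        constructor
        · rintro (hxC | ⟨y, hy, hyx⟩)
          · exact absurd hxC x.2
          · rwa [show y = x from Subtype.ext hyx] at hy
        · intro hx
          exact Or.inr ⟨x, hx, rfl⟩ }
  rw [Cardinal.mk_congr e1, Cardinal.mk_set]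
  congr 1
  -- the complement of C bijects with the realized non-isolated types
  have e2 : ↥(Cᶜ) ≃ {p : Set (QLang.Formula (Fin 1)) //
      (∃ a : M', p = tp1 QLang a) ∧ ¬ IsIsolated1 QLang M' p} := by
    refine Equiv.ofBijective
      (fun x => ⟨tp1 QLang ↑x, ⟨↑x, rfl⟩, not_isolated_of_not_cst
        (show (↑x : M') ∉ Set.range (cst : ℚ → M') from x.2)⟩) ⟨?_, ?_⟩
    · intro x y hxy
      apply Subtype.ext
      exact huniq _ _ (congrArg Subtype.val hxy)
    · rintro ⟨p, ⟨a, rfl⟩, hni⟩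
      have haC : a ∉ C := by
        rintro ⟨q, rfl⟩
        exact hni (isolated_of_cst q)
      exact ⟨⟨a, haC⟩, Subtype.ext rfl⟩
  have := Cardinal.lift_mk_eq'.mpr ⟨e2⟩
  rw [Cardinal.lift_uzero] at this
  rw [this, hlam]
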